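/- Consider the eight closed unit balls in R^4 centered at (0,0,0,0), (1,1,0,0), (1,0,1,0), (0,1,1,0), (1,1,1,1), (0,1,0,1), (1,0,0,1), (0,0,1,1). The intersection of all eight balls contains exactly the point (1/2,1/2,1/2,1/2), i.e. this point lies in every ball and is the unique such point. -/

import Mathlib

open Metric

lemma aux_stmt4 (a b c d : ℝ)
    (h0 : (a-0)^2 + (b-0)^2 + (c-0)^2 + (d-0)^2 ≤ 1)
    (h4 : (a-1)^2 + (b-1)^2 + (c-1)^2 + (d-1)^2 ≤ 1) :
    a = 1/2 ∧ b = 1/2 ∧ c = 1/2 ∧ d = 1/2 := by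
  have hsum : (a-1/2)^2 + (b-1/2)^2 + (c-1/2)^2 + (d-1/2)^2 ≤ 0 := by
    ring_nf at h0 h4 ⊢
    linarith
  have ha := sq_nonneg (a-1/2)
  have hb := sq_nonneg (b-1/2)
  have hc := sq_nonneg (c-1/2)
  have hd := sq_nonneg (d-1/2)
  have ea : (a-1/2)^2 = 0 := le_antisymm (by linarith) ha
  have eb : (b-1/2)^2 = 0 := le_antisymm (by linarith) hb
  have ec : (c-1/2)^2 = 0 := le_antisymm (by linarith) hc
  have ed : (d-1/2)^2 = 0 := le_antisymm (by linarith) hd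
  rw [pow_eq_zero_iff two_ne_zero, sub_eq_zero] at ea eb ec ed
  exact ⟨ea, eb, ec, ed⟩

/-- The intersection of the eight closed unit balls in `ℝ^4` centered at
`(0,0,0,0), (1,1,0,0), (1,0,1,0), (0,1,1,0), (1,1,1,1), (0,1,0,1), (1,0,0,1), (0,0,1,1)`
is exactly the singleton `{(1/2,1/2,1/2,1/2)}`. -/
theorem stmt_4 (c : Fin 8 → EuclideanSpace ℝ (Fin 4))
    (hc : c = fun i => (WithLp.equiv 2 (Fin 4 → ℝ)).symm
      (![![0,0,0,0], ![1,1,0,0], ![1,0,1,0], ![0,1,1,0],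
         ![1,1,1,1], ![0,1,0,1], ![1,0,0,1], ![0,0,1,1]] i)) :
    (⋂ i : Fin 8, closedBall (c i) 1) =
      {(WithLp.equiv 2 (Fin 4 → ℝ)).symm ![1/2, 1/2, 1/2, 1/2]} := by
  subst hc
  ext x
  simp only [Set.mem_iInter, mem_closedBall, Set.mem_singleton_iff]
  have hdist : ∀ y : Fin 4 → ℝ, dist x ((WithLp.equiv 2 (Fin 4 → ℝ)).symm y) ≤ 1 ↔
      (x 0 - y 0)^2 + (x 1 - y 1)^2 + (x 2 - y 2)^2 + (x 3 - y 3)^2 ≤ 1 := by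
    intro y
    rw [EuclideanSpace.dist_eq, Real.sqrt_le_one, Fin.sum_univ_four]
    simp [Real.dist_eq, sq_abs, WithLp.equiv_symm_apply, PiLp.toLp_apply]
  constructor
  · intro h
    have h0 := (hdist ![0,0,0,0]).1 (h 0)
    have h4 := (hdist ![1,1,1,1]).1 (h 4)
    norm_num [Matrix.cons_val_two, Matrix.cons_val_three, Matrix.tail_cons, Matrix.head_cons] at h0 h4
    obtain ⟨e0, e1, e2, e3⟩ := aux_stmt4 (x 0) (x 1) (x 2) (x 3) (by linarith) (by linarith)
    ext i
    fin_cases i <;> simp [WithLp.equiv_symm_apply, PiLp.toLp_apply, e0, e1, e2, e3]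
  · rintro rfl i
    fin_cases i <;> rw [hdist] <;> norm_num [Matrix.cons_val_two, Matrix.cons_val_three, Matrix.tail_cons, Matrix.head_cons]
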